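/- Let X and X' be i.i.d. centered Gaussian vectors in ℝ^p with covariance Σ. Fix vectors γ, γ̂ ∈ ℝ^{p−1} and β̂ ∈ ℝ^p, and define the two imputed vectors X̃ and X̃' by X̃^{−j} = X̃'^{−j} = X^{−j}, X̃^j = γᵀX^{−j} + (X'^j − γᵀX'^{−j}) and X̃'^j = γ̂ᵀX^{−j} + (X'^j − γ̂ᵀX'^{−j}). Then for the linear predictor m̂(x) = xᵀβ̂, E[(m̂(X̃) − m̂(X̃'))²] = 2 β̂_j² (γ − γ̂)ᵀ Σ_{−j,−j} (γ − γ̂). In particular, the leading bias term of CPI in the Gaussian linear model is the product of the squared estimated coefficient β̂_j² and the weighted estimation error ‖γ − γ̂‖²_{Σ_{−j,−j}} of the conditional-mean regression, which is the source of CPI's quadratic (doubly robust) bias decay under the conditional null. -/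

import Mathlib

open MeasureTheory ProbabilityTheory Real Set NNReal ENNReal

noncomputable section

/-- `X` is a Gaussian random vector with mean `μ` and covariance matrix `S`. -/
def IsGaussianVec {Ω : Type*} [MeasurableSpace Ω] (P : Measure Ω) {p : ℕ}
    (X : Ω → Fin p → ℝ) (μ : Fin p → ℝ) (S : Matrix (Fin p) (Fin p) ℝ) : Prop :=
  ∀ a : Fin p → ℝ,
    P.map (fun ω => ∑ i, a i * X ω i) =
      gaussianReal (∑ i, a i * μ i) (Real.toNNReal (∑ i, ∑ k, a i * S i k * a k))

-- odd function integrates to zero over volume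
lemma my_integral_odd {g : ℝ → ℝ} (h : ∀ x, g (-x) = - g x) : ∫ x, g x = 0 := by
  have A : MeasurableEmbedding fun x : ℝ => -x :=
    (Homeomorph.neg ℝ).isClosedEmbedding.measurableEmbedding
  have h1 : ∫ x, g x = ∫ x, g (-x) := by
    conv_lhs => rw [← Measure.map_neg_eq_self (volume : Measure ℝ)]
    rw [A.integral_map]
  have h2 : ∫ x, g (-x) = - ∫ x, g x := by
    simp_rw [h]; exact integral_neg g
  linarith [h1, h2]

lemma my_integral_sq_exp_Ioi {b : ℝ} (hb : 0 < b) :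
    ∫ x in Ioi (0:ℝ), x ^ 2 * Real.exp (-b * x ^ 2) = (1 / b) ^ ((3:ℝ)/2) * √π / 4 := by
  have key := integral_comp_rpow_Ioi_of_pos (g := fun y : ℝ =>
      (1/2) * (y ^ ((1:ℝ)/2) * Real.exp (-(b * y)))) zero_lt_two
  have h1 : ∫ y in Ioi (0:ℝ), (1/2) * (y ^ ((1:ℝ)/2) * Real.exp (-(b * y)))
      = (1 / b) ^ ((3:ℝ)/2) * √π / 4 := by
    rw [integral_const_mul]
    have h2 : ∫ y in Ioi (0:ℝ), y ^ ((1:ℝ)/2) * Real.exp (-(b * y))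
        = (1 / b) ^ ((3:ℝ)/2) * Real.Gamma ((3:ℝ)/2) := by
      have := integral_rpow_mul_exp_neg_mul_Ioi (a := (3:ℝ)/2) (r := b) (by norm_num) hb
      rw [← this]
      refine setIntegral_congr_fun measurableSet_Ioi fun x hx => ?_
      norm_num
    have hG : Real.Gamma ((3:ℝ)/2) = √π / 2 := by
      have : ((3:ℝ)/2) = 1/2 + 1 := by norm_num
      rw [this, Real.Gamma_add_one (by norm_num), Real.Gamma_one_half_eq]
      ring
    rw [h2, hG]; ring
  rw [← h1, ← key]
  refine setIntegral_congr_fun measurableSet_Ioi fun x hx => ?_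
  have hx0 : (0:ℝ) < x := hx
  have hxsq : (x ^ ((2:ℝ)) : ℝ) = x ^ 2 := by
    rw [show ((2:ℝ)) = ((2:ℕ):ℝ) by norm_num, Real.rpow_natCast]
  have hhalf : (x ^ ((2:ℝ))) ^ ((1:ℝ)/2) = x := by
    rw [← Real.rpow_mul hx0.le]; norm_num
  beta_reduce
  rw [smul_eq_mul, hhalf, hxsq]
  rw [show ((2:ℝ) - 1) = 1 by norm_num, Real.rpow_one]
  ring_nf

lemma my_integral_sq_exp {b : ℝ} (hb : 0 < b) :
    ∫ x : ℝ, x ^ 2 * Real.exp (-b * x ^ 2) = (1 / b) ^ ((3:ℝ)/2) * √π / 2 := by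
  have h := integral_comp_abs (f := fun y : ℝ => y ^ 2 * Real.exp (-b * y ^ 2))
  simp only [sq_abs] at h
  rw [h, my_integral_sq_exp_Ioi hb]; ring

lemma my_gauss_integral_eq {v : ℝ≥0} (hv : v ≠ 0) (g : ℝ → ℝ) :
    ∫ x, g x ∂(gaussianReal 0 v) = ∫ x, gaussianPDFReal 0 v x * g x := by
  rw [gaussianReal_of_var_ne_zero _ hv, gaussianPDF_def]
  have : (fun x => ENNReal.ofReal (gaussianPDFReal 0 v x))
      = fun x => ((Real.toNNReal (gaussianPDFReal 0 v x) : ℝ≥0) : ℝ≥0∞) := rfl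
  rw [this, integral_withDensity_eq_integral_smul
    ((measurable_gaussianPDFReal 0 v).real_toNNReal) g]
  refine integral_congr_ae (Filter.Eventually.of_forall fun x => ?_)
  simp [NNReal.smul_def, Real.coe_toNNReal _ (gaussianPDFReal_nonneg 0 v x)]

lemma my_gauss_integrable {v : ℝ≥0} (hv : v ≠ 0) {g : ℝ → ℝ}
    (h : Integrable (fun x => gaussianPDFReal 0 v x * g x))
    (hg : AEStronglyMeasurable g (gaussianReal 0 v)) :
    Integrable g (gaussianReal 0 v) := by
  rw [gaussianReal_of_var_ne_zero _ hv] at hg ⊢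
  rw [integrable_withDensity_iff (measurable_gaussianPDF 0 v)
    (Filter.Eventually.of_forall fun x => ENNReal.ofReal_lt_top) ]
  refine h.congr (Filter.Eventually.of_forall fun x => ?_)
  simp [gaussianPDF, ENNReal.toReal_ofReal (gaussianPDFReal_nonneg 0 v x), mul_comm]

-- pdf rewriting
lemma my_pdf_eq (v : ℝ≥0) (x : ℝ) :
    gaussianPDFReal 0 v x = (√(2 * π * v))⁻¹ * Real.exp (-(2 * (v:ℝ))⁻¹ * x ^ 2) := by
  unfold gaussianPDFReal
  congr 2
  ring

lemma my_integrable_pdf_mul_sq (v : ℝ≥0) (hv : v ≠ 0) :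
    Integrable (fun x : ℝ => gaussianPDFReal 0 v x * x ^ 2) := by
  have hb : (0:ℝ) < (2 * (v:ℝ))⁻¹ := by
    have : (0:ℝ) < (v:ℝ) := lt_of_le_of_ne (v.coe_nonneg) (by exact_mod_cast (Ne.symm hv))
    positivity
  have h := (integrable_rpow_mul_exp_neg_mul_sq hb (s := 2) (by norm_num)).const_mul
    ((√(2 * π * (v:ℝ)))⁻¹)
  refine h.congr (Filter.Eventually.of_forall fun x => ?_)
  beta_reduce
  rw [my_pdf_eq]
  rw [show ((2:ℝ)) = ((2:ℕ):ℝ) by norm_num, Real.rpow_natCast]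
  ring

lemma my_integrable_pdf_mul_id (v : ℝ≥0) (hv : v ≠ 0) :
    Integrable (fun x : ℝ => gaussianPDFReal 0 v x * x) := by
  have hb : (0:ℝ) < (2 * (v:ℝ))⁻¹ := by
    have : (0:ℝ) < (v:ℝ) := lt_of_le_of_ne (v.coe_nonneg) (by exact_mod_cast (Ne.symm hv))
    positivity
  have h := (integrable_rpow_mul_exp_neg_mul_sq hb (s := 1) (by norm_num)).const_mul
    ((√(2 * π * (v:ℝ)))⁻¹)
  refine h.congr (Filter.Eventually.of_forall fun x => ?_)
  beta_reduce
  rw [my_pdf_eq, Real.rpow_one]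
  ring

lemma my_gauss_integral_id (v : ℝ≥0) :
    ∫ x, x ∂(gaussianReal 0 v) = 0 := by
  by_cases hv : v = 0
  · simp [hv]
  rw [my_gauss_integral_eq hv]
  refine my_integral_odd fun x => ?_
  rw [my_pdf_eq, my_pdf_eq]
  ring_nf

lemma my_gauss_integral_sq (v : ℝ≥0) :
    ∫ x, x ^ 2 ∂(gaussianReal 0 v) = v := by
  by_cases hv : v = 0
  · simp [hv]
  have hvpos : (0:ℝ) < (v:ℝ) := lt_of_le_of_ne (v.coe_nonneg) (by exact_mod_cast (Ne.symm hv))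
  have hb : (0:ℝ) < (2 * (v:ℝ))⁻¹ := by positivity
  rw [my_gauss_integral_eq hv]
  have : (fun x : ℝ => gaussianPDFReal 0 v x * x ^ 2)
      = fun x => (√(2 * π * (v:ℝ)))⁻¹ * (x ^ 2 * Real.exp (-(2 * (v:ℝ))⁻¹ * x ^ 2)) := by
    funext x; rw [my_pdf_eq]; ring
  rw [this, integral_const_mul, my_integral_sq_exp hb]
  have hinv : (1 / (2 * (v:ℝ))⁻¹) = 2 * (v:ℝ) := by
    field_simp
  rw [hinv]
  have h32 : (2 * (v:ℝ)) ^ ((3:ℝ)/2) = (2 * (v:ℝ)) * √(2 * (v:ℝ)) := by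
    rw [show ((3:ℝ)/2) = 1 + 1/2 by norm_num, Real.rpow_add (by positivity), Real.rpow_one,
      ← Real.sqrt_eq_rpow]
  have hsqrt : √(2 * π * (v:ℝ)) = √(2 * (v:ℝ)) * √π := by
    rw [← Real.sqrt_mul (by positivity)]
    ring_nf
  rw [h32, hsqrt]
  have h1 : √(2 * (v:ℝ)) > 0 := Real.sqrt_pos.mpr (by positivity)
  have h2 : √π > 0 := Real.sqrt_pos.mpr Real.pi_pos
  field_simp

lemma my_sq_diff_integral {Ω : Type*} [MeasurableSpace Ω] (P : Measure Ω)
    [IsProbabilityMeasure P] {Z Z' : Ω → ℝ} (hZ : Measurable Z) (hZ' : Measurable Z')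
    (hind : IndepFun Z Z' P) (w : ℝ≥0)
    (hmZ : P.map Z = gaussianReal 0 w) (hmZ' : P.map Z' = gaussianReal 0 w) :
    ∫ ω, (Z ω - Z' ω) ^ 2 ∂P = 2 * (w : ℝ) := by
  have hsqm : AEStronglyMeasurable (fun x : ℝ => x ^ 2) (gaussianReal 0 w) :=
    (continuous_pow 2).aestronglyMeasurable
  have hidm : AEStronglyMeasurable (fun x : ℝ => x) (gaussianReal 0 w) :=
    continuous_id.aestronglyMeasurable
  have gsq : Integrable (fun x : ℝ => x ^ 2) (gaussianReal 0 w) := by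
    by_cases hw : w = 0
    · rw [hw, gaussianReal_zero_var]
      refine (integrable_const ((0:ℝ) ^ 2)).congr ?_
      rw [Filter.EventuallyEq]
      refine (ae_dirac_iff (p := fun x : ℝ => (0:ℝ) ^ 2 = x ^ 2) ?_).mpr rfl
      exact measurableSet_eq_fun measurable_const (measurable_id.pow_const 2)
    · exact my_gauss_integrable hw (my_integrable_pdf_mul_sq w hw) hsqm
  have gid : Integrable (fun x : ℝ => x) (gaussianReal 0 w) := by
    by_cases hw : w = 0
    · rw [hw, gaussianReal_zero_var]
      refine (integrable_const ((0:ℝ))).congr ?_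
      rw [Filter.EventuallyEq]
      refine (ae_dirac_iff (p := fun x : ℝ => (0:ℝ) = x) ?_).mpr rfl
      exact measurableSet_eq_fun measurable_const measurable_id
    · exact my_gauss_integrable hw (my_integrable_pdf_mul_id w hw) hidm
  have iZ2 : Integrable (fun ω => Z ω ^ 2) P := by
    have h := (integrable_map_measure (f := Z) (g := fun x : ℝ => x ^ 2)
      (by rw [hmZ]; exact hsqm) hZ.aemeasurable).mp (by rwa [hmZ])
    exact h
  have iZ'2 : Integrable (fun ω => Z' ω ^ 2) P := by
    have h := (integrable_map_measure (f := Z') (g := fun x : ℝ => x ^ 2)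
      (by rw [hmZ']; exact hsqm) hZ'.aemeasurable).mp (by rwa [hmZ'])
    exact h
  have iZ : Integrable Z P := by
    have h := (integrable_map_measure (f := Z) (g := fun x : ℝ => x)
      (by rw [hmZ]; exact hidm) hZ.aemeasurable).mp (by rwa [hmZ])
    exact h
  have iZ' : Integrable Z' P := by
    have h := (integrable_map_measure (f := Z') (g := fun x : ℝ => x)
      (by rw [hmZ']; exact hidm) hZ'.aemeasurable).mp (by rwa [hmZ'])
    exact h
  have imul : Integrable (fun ω => Z ω * Z' ω) P := hind.integrable_mul iZ iZ'
  have eZ2 : ∫ ω, Z ω ^ 2 ∂P = (w : ℝ) := by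
    have h := integral_map (φ := Z) hZ.aemeasurable (f := fun x : ℝ => x ^ 2)
      (by rw [hmZ]; exact hsqm)
    rw [← h, hmZ, my_gauss_integral_sq]
  have eZ'2 : ∫ ω, Z' ω ^ 2 ∂P = (w : ℝ) := by
    have h := integral_map (φ := Z') hZ'.aemeasurable (f := fun x : ℝ => x ^ 2)
      (by rw [hmZ']; exact hsqm)
    rw [← h, hmZ', my_gauss_integral_sq]
  have eZ : ∫ ω, Z ω ∂P = 0 := by
    have h := integral_map (φ := Z) hZ.aemeasurable (f := fun x : ℝ => x)
      (by rw [hmZ]; exact hidm)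
    rw [← h, hmZ, my_gauss_integral_id]
  have eZ' : ∫ ω, Z' ω ∂P = 0 := by
    have h := integral_map (φ := Z') hZ'.aemeasurable (f := fun x : ℝ => x)
      (by rw [hmZ']; exact hidm)
    rw [← h, hmZ', my_gauss_integral_id]
  have emul : ∫ ω, Z ω * Z' ω ∂P = 0 := by
    have h := hind.integral_mul_eq_mul_integral iZ.aestronglyMeasurable iZ'.aestronglyMeasurable
    rw [show (fun ω => Z ω * Z' ω) = Z * Z' from rfl, h, eZ, eZ', mul_zero]
  have hexp : ∀ ω, (Z ω - Z' ω) ^ 2 = Z ω ^ 2 + Z' ω ^ 2 - 2 * (Z ω * Z' ω) := by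
    intro ω; ring
  simp_rw [hexp]
  have hadd : Integrable (fun ω => Z ω ^ 2 + Z' ω ^ 2) P := iZ2.add iZ'2
  have hmul2 : Integrable (fun ω => 2 * (Z ω * Z' ω)) P := imul.const_mul 2
  rw [integral_sub hadd hmul2, integral_add iZ2 iZ'2, integral_const_mul, eZ2, eZ'2, emul]
  ring

/-- leading bias term of CPI in the Gaussian linear model: for i.i.d.
centered Gaussian vectors `X, X'` with covariance `S`, linear imputations of coordinate `j`
built from the true coefficients `γ` and estimated coefficients `γ̂` (both using the residual
of the independent copy), and a linear predictor `m̂(x) = xᵀβ̂`,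
`E[(m̂(X̃) - m̂(X̃'))²] = 2 β̂_j² (γ - γ̂)ᵀ S_{-j,-j} (γ - γ̂)`. -/
theorem cpi_leading_bias_gaussian_linear
    {Ω : Type*} [MeasurableSpace Ω] (P : Measure Ω) [IsProbabilityMeasure P]
    {p : ℕ} (j : Fin p) (X X' : Ω → Fin p → ℝ)
    (hX : Measurable X) (hX' : Measurable X')
    (hindep : IndepFun X X' P) (hid : IdentDistrib X X' P P)
    (S : Matrix (Fin p) (Fin p) ℝ) (hS : S.PosSemidef)
    (hGauss : IsGaussianVec P X 0 S)
    (γ γhat : {i : Fin p // i ≠ j} → ℝ) (βhat : Fin p → ℝ)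
    (Xt Xt' : Ω → Fin p → ℝ)
    (hXt : ∀ ω, Xt ω = Function.update (X ω) j
      ((∑ i : {i : Fin p // i ≠ j}, γ i * X ω i.1)
        + (X' ω j - ∑ i : {i : Fin p // i ≠ j}, γ i * X' ω i.1)))
    (hXt' : ∀ ω, Xt' ω = Function.update (X ω) j
      ((∑ i : {i : Fin p // i ≠ j}, γhat i * X ω i.1)
        + (X' ω j - ∑ i : {i : Fin p // i ≠ j}, γhat i * X' ω i.1)))
    (mhat : (Fin p → ℝ) → ℝ) (hmhat : ∀ x, mhat x = ∑ i, x i * βhat i) :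
    (∫ ω, (mhat (Xt ω) - mhat (Xt' ω)) ^ 2 ∂P)
      = 2 * βhat j ^ 2 * ∑ i : {i : Fin p // i ≠ j}, ∑ k : {i : Fin p // i ≠ j},
          (γ i - γhat i) * S i.1 k.1 * (γ k - γhat k) := by
  classical
  set d : {i : Fin p // i ≠ j} → ℝ := fun i => γ i - γhat i with hd
  set a : Fin p → ℝ := fun i => if h : i = j then 0 else d ⟨i, h⟩ with ha
  have key : ∀ x : Fin p → ℝ,
      ∑ i, a i * x i = ∑ i : {i : Fin p // i ≠ j}, d i * x i.1 := by
    intro x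
    have h0 : a j * x j = 0 := by simp [ha]
    rw [← Finset.add_sum_erase _ _ (Finset.mem_univ j), h0, zero_add,
      Finset.sum_subtype (p := fun i => i ≠ j) (Finset.univ.erase j)
        (fun i => by simp [Finset.mem_erase]) (fun i => a i * x i)]
    refine Finset.sum_congr rfl fun i _ => ?_
    simp [ha, i.2]
  set g : (Fin p → ℝ) → ℝ := fun x => ∑ i, a i * x i with hgdef
  have hgm : Measurable g := by
    apply Finset.measurable_sum
    intro i _
    exact (measurable_pi_apply i).const_mul _
  set Z : Ω → ℝ := fun ω => g (X ω) with hZdef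
  set Z' : Ω → ℝ := fun ω => g (X' ω) with hZ'def
  have hZm : Measurable Z := hgm.comp hX
  have hZ'm : Measurable Z' := hgm.comp hX'
  set σ2 : ℝ := ∑ i, ∑ k, a i * S i k * a k with hσ2
  have hdot : dotProduct a (S.mulVec a) = σ2 := by
    rw [hσ2]
    simp only [dotProduct, Matrix.mulVec, Finset.mul_sum]
    exact Finset.sum_congr rfl fun i _ => Finset.sum_congr rfl fun k _ => by ring
  have hσ2nn : 0 ≤ σ2 := by
    have h := hS.dotProduct_mulVec_nonneg a
    rwa [star_trivial, hdot] at h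
  have hmZ : P.map Z = gaussianReal 0 σ2.toNNReal := by
    have h := hGauss a
    simpa using h
  have hmZ' : P.map Z' = gaussianReal 0 σ2.toNNReal := by
    rw [← hmZ]
    exact ((hid.comp hgm).map_eq).symm
  have hindZ : IndepFun Z Z' P := hindep.comp hgm hgm
  have hint := my_sq_diff_integral P hZm hZ'm hindZ σ2.toNNReal hmZ hmZ'
  have hptw : ∀ ω, (mhat (Xt ω) - mhat (Xt' ω)) ^ 2 = βhat j ^ 2 * (Z ω - Z' ω) ^ 2 := by
    intro ω
    have hupd : ∀ y : ℝ, (fun i => Function.update (X ω) j y i * βhat i)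
        = Function.update (fun i => X ω i * βhat i) j (y * βhat j) := by
      intro y; funext i
      by_cases hi : i = j
      · subst hi; simp
      · simp [Function.update_of_ne hi]
    have hsum : ∀ y : ℝ, ∑ i, Function.update (X ω) j y i * βhat i
        = y * βhat j + ∑ i ∈ Finset.univ \ {j}, X ω i * βhat i := by
      intro y
      rw [show (fun i => Function.update (X ω) j y i * βhat i)
          = Function.update (fun i => X ω i * βhat i) j (y * βhat j) from hupd y]
      exact Finset.sum_update_of_mem (Finset.mem_univ j) _ _
    have hZω : Z ω = ∑ i : {i : Fin p // i ≠ j}, d i * X ω i.1 := key (X ω)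
    have hZ'ω : Z' ω = ∑ i : {i : Fin p // i ≠ j}, d i * X' ω i.1 := key (X' ω)
    rw [hmhat, hmhat, hXt, hXt', hsum, hsum, hZω, hZ'ω, hd]
    simp only [Finset.sum_sub_distrib, sub_mul]
    ring_nf
  have hσeq : σ2 = ∑ i : {i : Fin p // i ≠ j}, ∑ k : {i : Fin p // i ≠ j},
      (γ i - γhat i) * S i.1 k.1 * (γ k - γhat k) := by
    rw [hσ2]
    calc ∑ i, ∑ k, a i * S i k * a k
        = ∑ i, a i * (∑ k : {i : Fin p // i ≠ j}, d k * S i k.1) := by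
          refine Finset.sum_congr rfl fun i _ => ?_
          rw [← key (fun k => S i k), Finset.mul_sum]
          exact Finset.sum_congr rfl fun k _ => by ring
      _ = ∑ i : {i : Fin p // i ≠ j}, d i * (∑ k : {i : Fin p // i ≠ j}, d k * S i.1 k.1) :=
          key _
      _ = _ := by
          refine Finset.sum_congr rfl fun i _ => ?_
          rw [Finset.mul_sum]
          exact Finset.sum_congr rfl fun k _ => by rw [hd]; ring
  calc (∫ ω, (mhat (Xt ω) - mhat (Xt' ω)) ^ 2 ∂P)
      = ∫ ω, βhat j ^ 2 * (Z ω - Z' ω) ^ 2 ∂P := by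
        exact integral_congr_ae (Filter.Eventually.of_forall hptw)
    _ = βhat j ^ 2 * ∫ ω, (Z ω - Z' ω) ^ 2 ∂P := integral_const_mul _ _
    _ = βhat j ^ 2 * (2 * σ2) := by rw [hint, Real.coe_toNNReal σ2 hσ2nn]
    _ = _ := by rw [hσeq]; ring

end
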